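/- With the notation of the previous statement (p odd prime, ϖ Dwork uniformizer, m ∈ [2,p-2], α = 1 + ϖ^k u ∈ 1+ϖℤ_p[ϖ] with α^s = α^{ω^m(s)} for all s ∈ G, hence k ≡ m mod (p-1)): if α ≡ 1 (mod ϖ^{p-1}), then in fact α ≡ 1 (mod ϖ^{m+p-1}); equivalently, α ≡ 1 (mod p) implies α ≡ 1 (mod p·ϖ^m). -/
import Mathlib


/-- in the setting of Statement 7 (so `k ≡ m (mod p-1)`),
if `α ≡ 1 (mod ϖ^{p-1})` then `α ≡ 1 (mod ϖ^{m+p-1})`; equivalently,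
`α ≡ 1 (mod p)` implies `α ≡ 1 (mod p·ϖ^m)`. -/
theorem dwork_p_primary_refinement
    (p : ℕ) [hfact : Fact p.Prime] (hodd : Odd p)
    (R : Type) [CommRing R] [IsDomain R] [Algebra ℤ_[p] R]
    (hinj : Function.Injective (algebraMap ℤ_[p] R))
    (ϖ : R) (hϖ : ϖ ^ (p - 1) = -(p : R)) (hϖu : ¬IsUnit ϖ)
    (ω : (ZMod p)ˣ →* ℤ_[p]ˣ)
    (hω1 : ∀ s, PadicInt.toZMod ((ω s : ℤ_[p])) = (s : ZMod p))
    (hω2 : ∀ s, (ω s) ^ (p - 1) = 1)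
    (φ : (ZMod p)ˣ →* (R ≃ₐ[ℤ_[p]] R))
    (hφϖ : ∀ s, φ s ϖ = (ω s : ℤ_[p]) • ϖ)
    (m : ℕ) (hm1 : 2 ≤ m) (hm2 : m ≤ p - 2)
    (k : ℕ) (hk : 1 ≤ k) (u : R) (hu : IsUnit u)
    (α : R) (hα : α = 1 + ϖ ^ k * u)
    (hact : ∀ (s : (ZMod p)ˣ) (e : ℕ),
      (e : ℤ_[p]) - ((ω s : ℤ_[p])) ^ m ∈ Ideal.span {(p : ℤ_[p])} →
      φ s α - α ^ e ∈ Ideal.span {ϖ ^ (k + 1)})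
    (hkm : k % (p - 1) = m % (p - 1))
    (h1 : α - 1 ∈ Ideal.span {ϖ ^ (p - 1)}) :
    α - 1 ∈ Ideal.span {ϖ ^ (m + (p - 1))}
    ∧ α - 1 ∈ Ideal.span {(p : R) * ϖ ^ m} := by
  have hp5 : 5 ≤ p := by
    have hp2 := hfact.out.two_le
    rcases hodd with ⟨t, ht⟩
    omega
  have hpR : (p : R) ≠ 0 := by
    have : (p : ℤ_[p]) ≠ 0 := by
      exact_mod_cast Nat.cast_ne_zero.mpr hfact.out.ne_zero
    intro h
    apply this
    apply hinj
    simpa using h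
  have hϖ0 : ϖ ≠ 0 := by
    intro h
    apply hpR
    have : (0:R) ^ (p-1) = -(p:R) := by rw [← h]; exact hϖ
    rw [zero_pow (by omega : p - 1 ≠ 0)] at this
    exact neg_eq_zero.mp this.symm
  have hdvd : ϖ ^ (p - 1) ∣ ϖ ^ k := by
    rw [Ideal.mem_span_singleton, hα] at h1
    have : ϖ ^ (p - 1) ∣ ϖ ^ k * u := by simpa using h1
    exact hu.dvd_mul_right.mp this
  have hkge : p - 1 ≤ k := (pow_dvd_pow_iff hϖ0 hϖu).mp hdvd
  have hkbig : m + (p - 1) ≤ k := by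
    have h2 : m % (p - 1) = m := Nat.mod_eq_of_lt (by omega)
    have h3 := Nat.div_add_mod k (p - 1)
    have h4 : 1 ≤ k / (p - 1) := by
      rcases Nat.eq_zero_or_pos (k / (p - 1)) with h | h
      · exfalso; rw [h] at h3; simp at h3; omega
      · exact h
    have h5 : (p - 1) * 1 ≤ (p - 1) * (k / (p - 1)) := Nat.mul_le_mul_left _ h4
    omega
  have hmem : α - 1 ∈ Ideal.span {ϖ ^ (m + (p - 1))} := by
    rw [Ideal.mem_span_singleton, hα]
    have : α - 1 = ϖ ^ k * u := by rw [hα]; ring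
    simpa using (pow_dvd_pow ϖ hkbig).mul_right u
  refine ⟨hmem, ?_⟩
  rw [Ideal.mem_span_singleton] at hmem ⊢
  have key : (p : R) * ϖ ^ m = -(ϖ ^ (m + (p - 1))) := by
    rw [pow_add, hϖ]; ring
  rw [key]
  exact neg_dvd.mpr hmem
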